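/- Let G be a 1-path simple 1-dof Henneberg-I graph with base non-edge (v1, v2). If at least three vertices are constructed directly on the base pair v1, v2 (i.e., at least three vertices are adjacent to both v1 and v2 as their construction base), then G has a K_{3,3} minor. -/

import Mathlib

open SimpleGraph

variable {α : Type*} [DecidableEq α]

/-- Validity of a Henneberg-I construction sequence (list of steps `(v, u, w)` meaning
`v ◁ (u, w)`) starting from the vertex set `S`. -/
def ValidFrom (S : Finset α) : List (α × α × α) → Prop
  | [] => True
  | (v, u, w) :: rest => v ∉ S ∧ u ∈ S ∧ w ∈ S ∧ u ≠ w ∧ ValidFrom (insert v S) rest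

/-- The vertex set built by a Henneberg-I construction from base edge `(a, b)`. -/
def buildVerts (a b : α) (l : List (α × α × α)) : Finset α :=
  l.foldl (fun s p => insert p.1 s) {a, b}

/-- The edge set built by a Henneberg-I construction from base edge `(a, b)`. -/
def buildEdges (a b : α) (l : List (α × α × α)) : Finset (Sym2 α) :=
  l.foldl (fun s p => insert s(p.1, p.2.1) (insert s(p.1, p.2.2) s)) {s(a, b)}

/-- `(V, E)` is a Henneberg-I graph with base edge `(a, b)`. -/
def IsHennebergI (V : Finset α) (E : Finset (Sym2 α)) (a b : α) : Prop :=
  a ≠ b ∧ ∃ l, ValidFrom {a, b} l ∧ V = buildVerts a b l ∧ E = buildEdges a b l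

/-- `(V, E)` is a simple 1-dof Henneberg-I graph with base non-edge `(a, b)`:
adding back the base edge `(a, b)` gives a Henneberg-I graph with base edge `(a, b)`. -/
def IsSimple1Dof (V : Finset α) (E : Finset (Sym2 α)) (a b : α) : Prop :=
  s(a, b) ∉ E ∧ IsHennebergI V (insert s(a, b) E) a b

/-- `(V', E')` is a subgraph of `(V, E)`. -/
def IsSubgraphOf (V : Finset α) (E : Finset (Sym2 α)) (V' : Finset α)
    (E' : Finset (Sym2 α)) : Prop :=
  V' ⊆ V ∧ E' ⊆ E ∧ ∀ e ∈ E', ∀ v ∈ e, v ∈ V'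

/-- `(V, E)` is wellconstrained (Laman): `|E| = 2|V| - 3` and every subgraph on `m`
vertices has at most `2m - 3` edges. -/
def IsLaman (V : Finset α) (E : Finset (Sym2 α)) : Prop :=
  E.card + 3 = 2 * V.card ∧
  ∀ V' E', IsSubgraphOf V E V' E' → E'.card ≤ 2 * V'.card - 3

/-- The degree of the vertex `x` in the edge set `E`. -/
def degreeIn (E : Finset (Sym2 α)) (x : α) : ℕ := (E.filter (fun e => x ∈ e)).card

/-- A step `p = (v, u, w)` is constructed directly on the base pair `(a, b)`. -/
def OnBase (a b : α) (p : α × α × α) : Prop :=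
  (p.2.1 = a ∧ p.2.2 = b) ∨ (p.2.1 = b ∧ p.2.2 = a)

/-- The 1-path property: exactly one vertex other than `a` and `b` has degree 2. -/
def OnePath (V : Finset α) (E : Finset (Sym2 α)) (a b : α) : Prop :=
  ∃! x, x ∈ V ∧ x ≠ a ∧ x ≠ b ∧ degreeIn E x = 2

/-- Triangle-decomposability of a graph `(V, E)`. -/
inductive TriDecomp : Finset α → Finset (Sym2 α) → Prop
  | edge (u v : α) (h : u ≠ v) : TriDecomp {u, v} {s(u, v)}
  | triangle (u v w : α) (huv : u ≠ v) (hvw : v ≠ w) (huw : u ≠ w) :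
      TriDecomp {u, v, w} {s(u, v), s(v, w), s(u, w)}
  | merge (V1 V2 V3 : Finset α) (E1 E2 E3 : Finset (Sym2 α)) (v1 v2 v3 : α)
      (h12 : v1 ≠ v2) (h23 : v2 ≠ v3) (h13 : v1 ≠ v3)
      (t1 : TriDecomp V1 E1) (t2 : TriDecomp V2 E2) (t3 : TriDecomp V3 E3)
      (i12 : V1 ∩ V2 = {v3}) (i23 : V2 ∩ V3 = {v1}) (i13 : V1 ∩ V3 = {v2})
      (e12 : E1 ∩ E2 = ∅) (e23 : E2 ∩ E3 = ∅) (e13 : E1 ∩ E3 = ∅) :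
      TriDecomp (V1 ∪ V2 ∪ V3) (E1 ∪ E2 ∪ E3)

/-- `H` is a minor of `G`: branch-set definition. -/
def HasMinor {V W : Type*} (G : SimpleGraph V) (H : SimpleGraph W) : Prop :=
  ∃ f : W → Set V,
    (∀ w, (f w).Nonempty) ∧
    (∀ w, (G.induce (f w)).Connected) ∧
    (∀ w w', w ≠ w' → Disjoint (f w) (f w')) ∧
    ∀ w w', H.Adj w w' → ∃ x ∈ f w, ∃ y ∈ f w', G.Adj x y



instance (a b : α) : DecidablePred (OnBase a b) := fun p => by
  unfold OnBase; infer_instance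

lemma sym2_ne_right {x u w : α} (h : u ≠ w) : s(x, u) ≠ s(x, w) := by
  simp [Sym2.eq_iff, h, fun hh : x = w => (h : u ≠ w)]
  rintro rfl
  exact fun hh => absurd hh h

lemma sym2_ne_mixed {x u y : α} (h1 : x ≠ y) (h2 : u ≠ y) : s(x, u) ≠ s(y, x) := by
  rw [Ne, Sym2.eq_iff]
  push_neg
  exact ⟨fun h => absurd h h1, fun _ => h2⟩

def VS (S : Finset α) (l : List (α × α × α)) : Finset α :=
  l.foldl (fun s p => insert p.1 s) S

lemma mem_VS {S : Finset α} {l : List (α × α × α)} {x : α} :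
    x ∈ VS S l ↔ x ∈ S ∨ ∃ p ∈ l, p.1 = x := by
  induction l generalizing S with
  | nil => simp [VS]
  | cons p l ih =>
    simp only [VS, List.foldl_cons] at *
    rw [ih]
    simp only [Finset.mem_insert]
    constructor
    · rintro ((h | h) | ⟨q, hq, rfl⟩)
      · exact Or.inr ⟨p, List.mem_cons_self, h.symm⟩
      · exact Or.inl h
      · exact Or.inr ⟨q, List.mem_cons_of_mem _ hq, rfl⟩
    · rintro (h | ⟨q, hq, rfl⟩)
      · exact Or.inl (Or.inr h)
      · rcases List.mem_cons.1 hq with rfl | hq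
        · exact Or.inl (Or.inl rfl)
        · exact Or.inr ⟨q, hq, rfl⟩

lemma VS_subset (S : Finset α) (l : List (α × α × α)) : S ⊆ VS S l := by
  intro x hx; rw [mem_VS]; exact Or.inl hx

lemma VS_append (S : Finset α) (l1 l2 : List (α × α × α)) :
    VS S (l1 ++ l2) = VS (VS S l1) l2 := List.foldl_append

lemma validFrom_cons {S : Finset α} {p : α × α × α} {l : List (α × α × α)} :
    ValidFrom S (p :: l) ↔
      p.1 ∉ S ∧ p.2.1 ∈ S ∧ p.2.2 ∈ S ∧ p.2.1 ≠ p.2.2 ∧ ValidFrom (insert p.1 S) l := by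
  obtain ⟨v, u, w⟩ := p; rfl

lemma validFrom_append {S : Finset α} {l1 l2 : List (α × α × α)}
    (h : ValidFrom S (l1 ++ l2)) : ValidFrom S l1 ∧ ValidFrom (VS S l1) l2 := by
  induction l1 generalizing S with
  | nil => exact ⟨trivial, h⟩
  | cons p l ih =>
    rw [List.cons_append, validFrom_cons] at h
    obtain ⟨h1, h2, h3, h4, h5⟩ := h
    obtain ⟨ha, hb⟩ := ih h5
    exact ⟨validFrom_cons.mpr ⟨h1, h2, h3, h4, ha⟩, hb⟩

lemma validFrom_split {S : Finset α} {l1 l2 : List (α × α × α)} {p : α × α × α}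
    (h : ValidFrom S (l1 ++ p :: l2)) :
    p.1 ∉ VS S l1 ∧ p.2.1 ∈ VS S l1 ∧ p.2.2 ∈ VS S l1 ∧ p.2.1 ≠ p.2.2 ∧
      ValidFrom (insert p.1 (VS S l1)) l2 := by
  have := (validFrom_append h).2
  rwa [validFrom_cons] at this

lemma creators_not_mem {S : Finset α} {l : List (α × α × α)} (h : ValidFrom S l) :
    ∀ p ∈ l, p.1 ∉ S := by
  intro p hp
  obtain ⟨l1, l2, rfl⟩ := List.append_of_mem hp
  intro hx
  exact (validFrom_split h).1 (VS_subset _ _ hx)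

lemma creators_nodup {S : Finset α} {l : List (α × α × α)} (h : ValidFrom S l) :
    (l.map Prod.fst).Nodup := by
  induction l generalizing S with
  | nil => simp
  | cons p l ih =>
    rw [validFrom_cons] at h
    simp only [List.map_cons, List.nodup_cons]
    refine ⟨?_, ih h.2.2.2.2⟩
    simp only [List.mem_map]
    rintro ⟨q, hq, hq1⟩
    exact creators_not_mem h.2.2.2.2 q hq (hq1 ▸ Finset.mem_insert_self _ _)

lemma creators_inj {S : Finset α} {l : List (α × α × α)} (h : ValidFrom S l)
    {p q : α × α × α} (hp : p ∈ l) (hq : q ∈ l) (hpq : p.1 = q.1) : p = q :=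
  List.inj_on_of_nodup_map (creators_nodup h) hp hq hpq

lemma VS_mono_list {S : Finset α} {l1 l2 : List (α × α × α)} : VS S l1 ⊆ VS S (l1 ++ l2) := by
  intro x hx
  rw [mem_VS] at hx ⊢
  rcases hx with h | ⟨p, hp, rfl⟩
  · exact Or.inl h
  · exact Or.inr ⟨p, List.mem_append_left _ hp, rfl⟩

lemma mem_ES {S : Finset (Sym2 α)} {l : List (α × α × α)} {e : Sym2 α} :
    e ∈ l.foldl (fun s p => insert s(p.1, p.2.1) (insert s(p.1, p.2.2) s)) S ↔
      e ∈ S ∨ ∃ p ∈ l, e = s(p.1, p.2.1) ∨ e = s(p.1, p.2.2) := by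
  induction l generalizing S with
  | nil => simp
  | cons p l ih =>
    simp only [List.foldl_cons]
    rw [ih]
    simp only [Finset.mem_insert]
    constructor
    · rintro ((h | h | h) | ⟨q, hq, hq'⟩)
      · exact Or.inr ⟨p, List.mem_cons_self, Or.inl h⟩
      · exact Or.inr ⟨p, List.mem_cons_self, Or.inr h⟩
      · exact Or.inl h
      · exact Or.inr ⟨q, List.mem_cons_of_mem _ hq, hq'⟩
    · rintro (h | ⟨q, hq, hq'⟩)
      · exact Or.inl (Or.inr (Or.inr h))
      · rcases List.mem_cons.1 hq with rfl | hq
        · rcases hq' with h | h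
          · exact Or.inl (Or.inl h)
          · exact Or.inl (Or.inr (Or.inl h))
        · exact Or.inr ⟨q, hq, hq'⟩

lemma mem_buildEdges {a b : α} {l : List (α × α × α)} {e : Sym2 α} :
    e ∈ buildEdges a b l ↔ e = s(a, b) ∨ ∃ p ∈ l, e = s(p.1, p.2.1) ∨ e = s(p.1, p.2.2) := by
  rw [buildEdges, mem_ES]; simp

lemma mem_buildVerts {a b : α} {l : List (α × α × α)} {x : α} :
    x ∈ buildVerts a b l ↔ x = a ∨ x = b ∨ ∃ p ∈ l, p.1 = x := by
  rw [buildVerts]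
  change x ∈ VS _ _ ↔ _
  rw [mem_VS]
  simp [or_assoc]

lemma anchors_mem_prefix {S : Finset α} {l1 : List (α × α × α)} {r : α × α × α}
    (h : ValidFrom S l1) (hr : r ∈ l1) : r.2.1 ∈ VS S l1 ∧ r.2.2 ∈ VS S l1 := by
  obtain ⟨m1, m2, rfl⟩ := List.append_of_mem hr
  obtain ⟨_, h1, h2, _, _⟩ := validFrom_split h
  have hsub : VS S m1 ⊆ VS S (m1 ++ r :: m2) := VS_mono_list.trans (by
    intro x hx
    rw [mem_VS] at hx ⊢
    rcases hx with hx | ⟨p, hp, rfl⟩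
    · exact Or.inl hx
    · refine Or.inr ⟨p, ?_, rfl⟩
      rcases List.mem_append.1 hp with hp | hp
      · exact List.mem_append_left _ hp
      · exact List.mem_append_right _ (List.mem_cons_of_mem _ hp))
  exact ⟨hsub h1, hsub h2⟩

lemma edge_at_creator {a b : α} {l : List (α × α × α)} (hv : ValidFrom {a, b} l)
    {l1 l2 : List (α × α × α)} {p : α × α × α} (hsplit : l = l1 ++ p :: l2)
    {e : Sym2 α} (he : e ∈ buildEdges a b l) (hx : p.1 ∈ e) :
    e = s(p.1, p.2.1) ∨ e = s(p.1, p.2.2) ∨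
      ∃ q ∈ l2, (q.2.1 = p.1 ∨ q.2.2 = p.1) ∧ e = s(q.1, p.1) := by
  subst hsplit
  have hp1 : p.1 ∉ VS ({a, b} : Finset α) l1 := (validFrom_split hv).1
  have hpab : p.1 ∉ ({a, b} : Finset α) := fun h => hp1 (VS_subset _ _ h)
  rcases mem_buildEdges.1 he with rfl | ⟨q, hq, hq'⟩
  · exfalso
    rcases Sym2.mem_iff.1 hx with rfl | rfl
    · exact hpab (Finset.mem_insert_self _ _)
    · exact hpab (Finset.mem_insert_of_mem (Finset.mem_singleton_self _))
  · have hpmem : p ∈ l1 ++ p :: l2 :=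
      List.mem_append_right _ (List.mem_cons_self)
    rcases hq' with rfl | rfl
    · rcases Sym2.mem_iff.1 hx with h1 | h1
      · have : q = p := creators_inj hv hq hpmem h1.symm
        subst this
        exact Or.inl rfl
      · -- p.1 = q.2.1 : q anchors p.1
        rcases List.mem_append.1 hq with hq | hq
        · exfalso
          have := (anchors_mem_prefix (validFrom_append hv).1 hq).1
          rw [h1] at hp1
          exact hp1 this
        · rcases List.mem_cons.1 hq with rfl | hq
          · exact absurd ((validFrom_split hv).2.1) (h1 ▸ hp1)
          · exact Or.inr (Or.inr ⟨q, hq, Or.inl h1.symm, by rw [h1]⟩)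
    · rcases Sym2.mem_iff.1 hx with h1 | h1
      · have : q = p := creators_inj hv hq hpmem h1.symm
        subst this
        exact Or.inr (Or.inl rfl)
      · rcases List.mem_append.1 hq with hq | hq
        · exfalso
          have := (anchors_mem_prefix (validFrom_append hv).1 hq).2
          rw [h1] at hp1
          exact hp1 this
        · rcases List.mem_cons.1 hq with rfl | hq
          · exact absurd ((validFrom_split hv).2.2.1) (h1 ▸ hp1)
          · exact Or.inr (Or.inr ⟨q, hq, Or.inr h1.symm, by rw [h1]⟩)

lemma ne_base {a b x : α} {e : Sym2 α} (hx : x ∉ ({a, b} : Finset α)) (hxe : x ∈ e) :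
    e ≠ s(a, b) := by
  rintro rfl
  rcases Sym2.mem_iff.1 hxe with rfl | rfl
  · exact hx (Finset.mem_insert_self _ _)
  · exact hx (Finset.mem_insert_of_mem (Finset.mem_singleton_self _))

lemma creator_not_base {a b : α} {l : List (α × α × α)} (hv : ValidFrom {a, b} l)
    {p : α × α × α} (hp : p ∈ l) : p.1 ∉ ({a, b} : Finset α) :=
  creators_not_mem hv p hp

lemma degree_eq_two {a b : α} {l : List (α × α × α)} (hv : ValidFrom {a, b} l)
    {l1 l2 : List (α × α × α)} {p : α × α × α} (hsplit : l = l1 ++ p :: l2)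
    (hno : ∀ q ∈ l2, q.2.1 ≠ p.1 ∧ q.2.2 ≠ p.1) :
    degreeIn ((buildEdges a b l).erase s(a, b)) p.1 = 2 := by
  have hpl : p ∈ l := hsplit ▸ List.mem_append_right _ (List.mem_cons_self)
  have hpab : p.1 ∉ ({a, b} : Finset α) := creator_not_base hv hpl
  have huw : p.2.1 ≠ p.2.2 := by
    subst hsplit; exact (validFrom_split hv).2.2.2.1
  have hfe : (((buildEdges a b l).erase s(a, b)).filter (fun e => p.1 ∈ e))
      = {s(p.1, p.2.1), s(p.1, p.2.2)} := by
    ext e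
    simp only [Finset.mem_filter, Finset.mem_erase, Finset.mem_insert, Finset.mem_singleton]
    constructor
    · rintro ⟨⟨hne, he⟩, hxe⟩
      rcases edge_at_creator hv hsplit he hxe with h | h | ⟨q, hq, hanch, rfl⟩
      · exact Or.inl h
      · exact Or.inr h
      · exact absurd hanch (by push_neg; exact hno q hq)
    · rintro (rfl | rfl)
      · exact ⟨⟨ne_base hpab (Sym2.mem_mk_left _ _), mem_buildEdges.2 (Or.inr ⟨p, hpl, Or.inl rfl⟩)⟩,
          Sym2.mem_mk_left _ _⟩
      · exact ⟨⟨ne_base hpab (Sym2.mem_mk_left _ _), mem_buildEdges.2 (Or.inr ⟨p, hpl, Or.inr rfl⟩)⟩,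
          Sym2.mem_mk_left _ _⟩
  rw [degreeIn, hfe]
  rw [Finset.card_insert_of_notMem (by simpa using sym2_ne_right huw), Finset.card_singleton]

lemma degree_ge_three {a b : α} {l : List (α × α × α)} (hv : ValidFrom {a, b} l)
    {l1 l2 : List (α × α × α)} {p : α × α × α} (hsplit : l = l1 ++ p :: l2)
    {q : α × α × α} (hq : q ∈ l2) (hanch : q.2.1 = p.1 ∨ q.2.2 = p.1) :
    3 ≤ degreeIn ((buildEdges a b l).erase s(a, b)) p.1 := by
  have hpl : p ∈ l := hsplit ▸ List.mem_append_right _ (List.mem_cons_self)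
  have hql : q ∈ l := hsplit ▸ List.mem_append_right _ (List.mem_cons_of_mem _ hq)
  have hpab : p.1 ∉ ({a, b} : Finset α) := creator_not_base hv hpl
  have hqab : q.1 ∉ ({a, b} : Finset α) := creator_not_base hv hql
  have huw : p.2.1 ≠ p.2.2 := by
    subst hsplit; exact (validFrom_split hv).2.2.2.1
  -- q.1 distinct from p.1, p.2.1, p.2.2
  obtain ⟨m1, m2, rfl⟩ := List.append_of_mem hq
  have hsplit2 : l = (l1 ++ p :: m1) ++ q :: m2 := by
    rw [hsplit]; simp
  have hq1 : q.1 ∉ VS ({a, b} : Finset α) (l1 ++ p :: m1) := by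
    rw [hsplit2] at hv
    exact (validFrom_split hv).1
  have hVSl1 : VS ({a, b} : Finset α) l1 ⊆ VS ({a, b} : Finset α) (l1 ++ p :: m1) :=
    VS_mono_list
  have hq1p : q.1 ≠ p.1 := fun h =>
    hq1 (h ▸ mem_VS.2 (Or.inr ⟨p, List.mem_append_right _ (List.mem_cons_self), rfl⟩))
  have hanchors := by subst hsplit; exact (validFrom_split hv)
  have hq1u : q.1 ≠ p.2.1 := fun h => hq1 (h ▸ hVSl1 hanchors.2.1)
  have hq1w : q.1 ≠ p.2.2 := fun h => hq1 (h ▸ hVSl1 hanchors.2.2.1)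
  have hsub : ({s(p.1, p.2.1), s(p.1, p.2.2), s(q.1, p.1)} : Finset (Sym2 α)) ⊆
      ((buildEdges a b l).erase s(a, b)).filter (fun e => p.1 ∈ e) := by
    intro e he
    simp only [Finset.mem_insert, Finset.mem_singleton] at he
    simp only [Finset.mem_filter, Finset.mem_erase]
    rcases he with rfl | rfl | rfl
    · exact ⟨⟨ne_base hpab (Sym2.mem_mk_left _ _), mem_buildEdges.2 (Or.inr ⟨p, hpl, Or.inl rfl⟩)⟩,
        Sym2.mem_mk_left _ _⟩
    · exact ⟨⟨ne_base hpab (Sym2.mem_mk_left _ _), mem_buildEdges.2 (Or.inr ⟨p, hpl, Or.inr rfl⟩)⟩,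
        Sym2.mem_mk_left _ _⟩
    · refine ⟨⟨ne_base hpab (Sym2.mem_mk_right _ _), mem_buildEdges.2 (Or.inr ⟨q, hql, ?_⟩)⟩,
        Sym2.mem_mk_right _ _⟩
      rcases hanch with h | h
      · exact Or.inl (by rw [h])
      · exact Or.inr (by rw [h])
  have hcard : ({s(p.1, p.2.1), s(p.1, p.2.2), s(q.1, p.1)} : Finset (Sym2 α)).card = 3 := by
    rw [Finset.card_insert_of_notMem, Finset.card_insert_of_notMem, Finset.card_singleton]
    · simpa using sym2_ne_mixed hq1p.symm hq1w.symm
    · simp only [Finset.mem_insert, Finset.mem_singleton]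
      push_neg
      exact ⟨sym2_ne_right huw, sym2_ne_mixed hq1p.symm hq1u.symm⟩
  calc 3 = _ := hcard.symm
    _ ≤ _ := Finset.card_le_card hsub

lemma induce_singleton_connected (G : SimpleGraph α) (v : α) :
    (G.induce ({v} : Set α)).Connected := by
  have : Nonempty ({v} : Set α) := ⟨⟨v, rfl⟩⟩
  refine ⟨fun a b => ?_⟩
  have : a = b := Subtype.ext ((Set.mem_singleton_iff.1 a.2).trans
    (Set.mem_singleton_iff.1 b.2).symm)
  rw [this]

/-- A 1-path simple 1-dof Henneberg-I graph in which at least three vertices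
are constructed directly on the base pair `(v1, v2)` has a `K_{3,3}` minor. -/
theorem stmt9 (v1 v2 : α) (hab : v1 ≠ v2) (l : List (α × α × α))
    (hl : ValidFrom {v1, v2} l)
    (V : Finset α) (E : Finset (Sym2 α))
    (hV : V = buildVerts v1 v2 l) (hE : E = (buildEdges v1 v2 l).erase s(v1, v2))
    (h1p : OnePath V E v1 v2)
    (h3 : 3 ≤ l.countP (fun p => decide (OnBase v1 v2 p))) :
    HasMinor (SimpleGraph.fromEdgeSet (E : Set (Sym2 α)))
      (completeBipartiteGraph (Fin 3) (Fin 3)) := by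
  classical
  subst hV hE
  obtain ⟨t0, ⟨ht0V, ht0v1, ht0v2, ht0deg⟩, huniq⟩ := h1p
  set G := SimpleGraph.fromEdgeSet
    (((buildEdges v1 v2 l).erase s(v1, v2) : Finset (Sym2 α)) : Set (Sym2 α)) with hG
  -- extract the three on-base steps
  obtain ⟨p1, p2, p3, lr, hlf3⟩ : ∃ p1 p2 p3 r,
      l.filter (fun p => decide (OnBase v1 v2 p)) = p1 :: p2 :: p3 :: r := by
    rcases hf : l.filter (fun p => decide (OnBase v1 v2 p)) with _ | ⟨q1, _ | ⟨q2, _ | ⟨q3, r⟩⟩⟩ <;>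
      [skip; skip; skip; exact ⟨_, _, _, _, rfl⟩] <;>
    · exfalso
      rw [List.countP_eq_length_filter, hf] at h3
      simp at h3
  have hmem : ∀ p, p ∈ l.filter (fun p => decide (OnBase v1 v2 p)) →
      p ∈ l ∧ OnBase v1 v2 p := by
    intro p hp
    have := List.mem_filter.1 hp
    exact ⟨this.1, of_decide_eq_true this.2⟩
  have hp1l : p1 ∈ l := (hmem p1 (hlf3 ▸ List.mem_cons_self)).1
  have hob1 : OnBase v1 v2 p1 := (hmem p1 (hlf3 ▸ List.mem_cons_self)).2
  have hp2l : p2 ∈ l :=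
    (hmem p2 (hlf3 ▸ List.mem_cons_of_mem _ (List.mem_cons_self))).1
  have hob2 : OnBase v1 v2 p2 :=
    (hmem p2 (hlf3 ▸ List.mem_cons_of_mem _ (List.mem_cons_self))).2
  have hp3l : p3 ∈ l :=
    (hmem p3 (hlf3 ▸ List.mem_cons_of_mem _
      (List.mem_cons_of_mem _ (List.mem_cons_self)))).1
  have hob3 : OnBase v1 v2 p3 :=
    (hmem p3 (hlf3 ▸ List.mem_cons_of_mem _
      (List.mem_cons_of_mem _ (List.mem_cons_self)))).2
  have hnodup := creators_nodup hl
  have hfilnd : ((l.filter (fun p => decide (OnBase v1 v2 p))).map Prod.fst).Nodup :=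
    hnodup.sublist ((List.filter_sublist).map _)
  rw [hlf3] at hfilnd
  simp only [List.map_cons, List.nodup_cons, List.mem_cons, List.mem_map] at hfilnd
  have hne12 : p1.1 ≠ p2.1 := fun h => hfilnd.1 (Or.inl h)
  have hne13 : p1.1 ≠ p3.1 := fun h => hfilnd.1 (Or.inr (Or.inl h))
  have hne23 : p2.1 ≠ p3.1 := fun h => hfilnd.2.1 (Or.inl h)
  have hcb : ∀ p ∈ l, p.1 ≠ v1 ∧ p.1 ≠ v2 := by
    intro p hp
    have h := creator_not_base hl hp
    simp only [Finset.mem_insert, Finset.mem_singleton] at h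
    push_neg at h
    exact h
  -- (a) degree-2 vertices
  have hdeg2 : ∀ (l1 : List (α × α × α)) (p : α × α × α) l2, l = l1 ++ p :: l2 →
      (∀ q ∈ l2, q.2.1 ≠ p.1 ∧ q.2.2 ≠ p.1) → p.1 = t0 := by
    intro l1 p l2 hsplit hno
    have hpl : p ∈ l := hsplit ▸ List.mem_append_right _ (List.mem_cons_self)
    exact huniq p.1 ⟨mem_buildVerts.2 (Or.inr (Or.inr ⟨p, hpl, rfl⟩)),
      (hcb p hpl).1, (hcb p hpl).2, degree_eq_two hl hsplit hno⟩
  -- (b) on-base steps are anchored later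
  have hanchored : ∀ (l1 : List (α × α × α)) (p : α × α × α) l2, l = l1 ++ p :: l2 →
      OnBase v1 v2 p → ∃ q ∈ l2, q.2.1 = p.1 ∨ q.2.2 = p.1 := by
    intro l1 p l2 hsplit hob
    by_contra hno
    push_neg at hno
    have hno' : ∀ q ∈ l2, q.2.1 ≠ p.1 ∧ q.2.2 ≠ p.1 := by
      intro q hq
      have := hno q hq
      tauto
    have hpt0 : p.1 = t0 := hdeg2 _ _ _ hsplit hno'
    have hlen : 3 ≤ l.length := le_trans h3 (List.countP_le_length)
    rcases List.eq_nil_or_concat l with rfl | ⟨L, pl, hL⟩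
    · simp at hlen
    have hLapp : l = L ++ pl :: [] := by rw [hL, List.concat_eq_append]
    have hplast : pl.1 = t0 := hdeg2 L pl [] hLapp (by simp)
    have hppl : p = pl := creators_inj hl
      (hsplit ▸ List.mem_append_right _ (List.mem_cons_self))
      (hLapp ▸ List.mem_append_right _ (List.mem_cons_self))
      (by rw [hpt0, hplast])
    rcases List.eq_nil_or_concat L with rfl | ⟨M, q2, hM⟩
    · rw [hLapp] at hlen; simp at hlen
    have hsplit2 : l = M ++ q2 :: [pl] := by
      rw [hLapp, hM, List.concat_eq_append]; simp
    have hq2l : q2 ∈ l := hsplit2 ▸ List.mem_append_right _ (List.mem_cons_self)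
    have hq2t0 : q2.1 = t0 := by
      refine hdeg2 M q2 [pl] hsplit2 ?_
      intro q hq
      rcases List.mem_singleton.1 hq with rfl
      rw [← hppl]
      have hq2b := hcb q2 hq2l
      rcases hob with ⟨h1, h2⟩ | ⟨h1, h2⟩ <;> rw [h1, h2]
      · exact ⟨fun h => hq2b.1 h.symm, fun h => hq2b.2 h.symm⟩
      · exact ⟨fun h => hq2b.2 h.symm, fun h => hq2b.1 h.symm⟩
    have hsubl : ([q2, pl].map Prod.fst).Sublist (l.map Prod.fst) := by
      rw [hsplit2]
      exact (List.sublist_append_right M _).map _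
    have hnd := hnodup.sublist hsubl
    simp only [List.map_cons, List.map_nil, List.nodup_cons, List.mem_singleton] at hnd
    exact hnd.1 (hq2t0.trans hplast.symm)
  -- on-base vertices have degree ≥ 3, so t0 differs from them
  have hdeg3 : ∀ (l1 : List (α × α × α)) (p : α × α × α) l2, l = l1 ++ p :: l2 →
      OnBase v1 v2 p →
      3 ≤ degreeIn ((buildEdges v1 v2 l).erase s(v1, v2)) p.1 := by
    intro l1 p l2 hs hob
    obtain ⟨q, hq, hanch⟩ := hanchored l1 p l2 hs hob
    exact degree_ge_three hl hs hq hanch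
  have ht0ne : ∀ p ∈ l, OnBase v1 v2 p → t0 ≠ p.1 := by
    intro p hp hob h
    obtain ⟨l1, l2, rfl⟩ := List.append_of_mem hp
    have := hdeg3 l1 p l2 rfl hob
    rw [← h, ht0deg] at this
    omega
  set Y : Set α := {y | y ∈ buildVerts v1 v2 l ∧ y ≠ v1 ∧ y ≠ v2 ∧
    y ≠ p1.1 ∧ y ≠ p2.1 ∧ y ≠ p3.1} with hYdef
  have ht0Y : t0 ∈ Y := ⟨ht0V, ht0v1, ht0v2, ht0ne p1 hp1l hob1,
    ht0ne p2 hp2l hob2, ht0ne p3 hp3l hob3⟩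
  -- any step anchoring a non-base vertex has its creator in Y
  have hqY : ∀ q ∈ l, ∀ x : α, (q.2.1 = x ∨ q.2.2 = x) → x ≠ v1 → x ≠ v2 → q.1 ∈ Y := by
    intro q hq x hanch hx1 hx2
    have hne : ∀ pi, pi ∈ l → OnBase v1 v2 pi → q.1 ≠ pi.1 := by
      intro pi hpi hobi h
      obtain rfl := creators_inj hl hq hpi h
      rcases hanch with h' | h' <;> rcases hobi with ⟨ha, hb⟩ | ⟨ha, hb⟩
      · exact hx1 (h'.symm.trans ha)
      · exact hx2 (h'.symm.trans ha)
      · exact hx2 (h'.symm.trans hb)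
      · exact hx1 (h'.symm.trans hb)
    exact ⟨mem_buildVerts.2 (Or.inr (Or.inr ⟨q, hq, rfl⟩)), (hcb q hq).1, (hcb q hq).2,
      hne p1 hp1l hob1, hne p2 hp2l hob2, hne p3 hp3l hob3⟩
  -- adjacency from a later anchoring step
  have hstep_adj : ∀ (l1 : List (α × α × α)) (p : α × α × α) l2, l = l1 ++ p :: l2 →
      ∀ q ∈ l2, (q.2.1 = p.1 ∨ q.2.2 = p.1) → G.Adj q.1 p.1 := by
    intro l1 p l2 hsplit q hq hanch
    obtain ⟨m1, m2, rfl⟩ := List.append_of_mem hq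
    have hsplit2 : l = (l1 ++ p :: m1) ++ q :: m2 := by rw [hsplit]; simp
    have hql : q ∈ l := hsplit2 ▸ List.mem_append_right _ (List.mem_cons_self)
    have hpl : p ∈ l := hsplit ▸ List.mem_append_right _ (List.mem_cons_self)
    have hq1p : q.1 ≠ p.1 := by
      have hv' := hsplit2 ▸ hl
      have h1 := (validFrom_split hv').1
      intro h
      exact h1 (h ▸ mem_VS.2 (Or.inr ⟨p,
        List.mem_append_right _ (List.mem_cons_self), rfl⟩))
    have hpb : p.1 ∉ ({v1, v2} : Finset α) := creator_not_base hl hpl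
    have hedge : s(q.1, p.1) ∈ buildEdges v1 v2 l := mem_buildEdges.2 (Or.inr ⟨q, hql, by
      rcases hanch with h | h
      · exact Or.inl (by rw [h])
      · exact Or.inr (by rw [h])⟩)
    rw [hG, SimpleGraph.fromEdgeSet_adj]
    exact ⟨Finset.mem_coe.2 (Finset.mem_erase.2
      ⟨ne_base hpb (Sym2.mem_mk_right _ _), hedge⟩), hq1p⟩
  -- reachability to t0 within Y
  have key : ∀ (n : ℕ) (l1 : List (α × α × α)) (p : α × α × α) l2,
      l = l1 ++ p :: l2 → l2.length ≤ n →
      ∀ hp : p.1 ∈ Y, (G.induce Y).Reachable ⟨p.1, hp⟩ ⟨t0, ht0Y⟩ := by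
    intro n
    induction n with
    | zero =>
      intro l1 p l2 hsplit hlen hp
      obtain rfl : l2 = [] := List.length_eq_zero_iff.1 (Nat.le_zero.1 hlen)
      have h := hdeg2 l1 p [] hsplit (by simp)
      have : (⟨p.1, hp⟩ : Y) = ⟨t0, ht0Y⟩ := Subtype.ext h
      rw [this]
    | succ n ih =>
      intro l1 p l2 hsplit hlen hp
      by_cases hno : ∀ q ∈ l2, q.2.1 ≠ p.1 ∧ q.2.2 ≠ p.1
      · have h := hdeg2 l1 p l2 hsplit hno
        have : (⟨p.1, hp⟩ : Y) = ⟨t0, ht0Y⟩ := Subtype.ext h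
        rw [this]
      · push_neg at hno
        obtain ⟨q, hq, hanch0⟩ := hno
        have hanch : q.2.1 = p.1 ∨ q.2.2 = p.1 := by tauto
        have hadjG : G.Adj q.1 p.1 := hstep_adj l1 p l2 hsplit q hq hanch
        obtain ⟨m1, m2, rfl⟩ := List.append_of_mem hq
        have hsplit2 : l = (l1 ++ p :: m1) ++ q :: m2 := by rw [hsplit]; simp
        have hql : q ∈ l := hsplit2 ▸ List.mem_append_right _ (List.mem_cons_self)
        have hqy : q.1 ∈ Y := hqY q hql p.1 hanch hp.2.1 hp.2.2.1
        have hadj : (G.induce Y).Adj ⟨p.1, hp⟩ ⟨q.1, hqy⟩ := hadjG.symm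
        have hlen2 : m2.length ≤ n := by
          simp only [List.length_append, List.length_cons] at hlen
          omega
        exact hadj.reachable.trans (ih (l1 ++ p :: m1) q m2 hsplit2 hlen2 hqy)
  -- connectivity of Y
  haveI : Nonempty Y := ⟨⟨t0, ht0Y⟩⟩
  have hreach : ∀ u : Y, (G.induce Y).Reachable u ⟨t0, ht0Y⟩ := by
    rintro ⟨u, hu⟩
    rcases mem_buildVerts.1 hu.1 with rfl | rfl | ⟨p, hp, hpu⟩
    · exact absurd rfl hu.2.1
    · exact absurd rfl hu.2.2.1
    · subst hpu
      obtain ⟨l1, l2, rfl⟩ := List.append_of_mem hp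
      exact key l2.length l1 p l2 rfl le_rfl hu
  have hYconn : (G.induce Y).Connected :=
    ⟨fun u v => (hreach u).trans (hreach v).symm⟩
  -- adjacency facts for on-base steps
  have hOBadj : ∀ p ∈ l, OnBase v1 v2 p →
      G.Adj v1 p.1 ∧ G.Adj v2 p.1 ∧ ∃ z, z ∈ Y ∧ G.Adj z p.1 := by
    intro p hp hob
    have hpb : p.1 ∉ ({v1, v2} : Finset α) := creator_not_base hl hp
    have hedge1 : s(p.1, v1) ∈ buildEdges v1 v2 l := mem_buildEdges.2 (Or.inr ⟨p, hp, by
      rcases hob with ⟨h1, h2⟩ | ⟨h1, h2⟩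
      · exact Or.inl (by rw [h1])
      · exact Or.inr (by rw [h2])⟩)
    have hedge2 : s(p.1, v2) ∈ buildEdges v1 v2 l := mem_buildEdges.2 (Or.inr ⟨p, hp, by
      rcases hob with ⟨h1, h2⟩ | ⟨h1, h2⟩
      · exact Or.inr (by rw [h2])
      · exact Or.inl (by rw [h1])⟩)
    refine ⟨?_, ?_, ?_⟩
    · rw [hG, SimpleGraph.fromEdgeSet_adj]
      refine ⟨Finset.mem_coe.2 (Finset.mem_erase.2
        ⟨by rw [Sym2.eq_swap]; exact ne_base hpb (Sym2.mem_mk_left _ _), by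
          rw [Sym2.eq_swap]; exact hedge1⟩), fun h => (hcb p hp).1 h.symm⟩
    · rw [hG, SimpleGraph.fromEdgeSet_adj]
      refine ⟨Finset.mem_coe.2 (Finset.mem_erase.2
        ⟨by rw [Sym2.eq_swap]; exact ne_base hpb (Sym2.mem_mk_left _ _), by
          rw [Sym2.eq_swap]; exact hedge2⟩), fun h => (hcb p hp).2 h.symm⟩
    · obtain ⟨l1, l2, hsplit⟩ := List.append_of_mem hp
      obtain ⟨q, hq, hanch⟩ := hanchored l1 p l2 hsplit hob
      have hql : q ∈ l := hsplit ▸ List.mem_append_right _ (List.mem_cons_of_mem _ hq)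
      exact ⟨q.1, hqY q hql p.1 hanch (hcb p hp).1 (hcb p hp).2,
        hstep_adj l1 p l2 hsplit q hq hanch⟩
  obtain ⟨hA11, hA12, z1, hz1Y, hz1⟩ := hOBadj p1 hp1l hob1
  obtain ⟨hA21, hA22, z2, hz2Y, hz2⟩ := hOBadj p2 hp2l hob2
  obtain ⟨hA31, hA32, z3, hz3Y, hz3⟩ := hOBadj p3 hp3l hob3
  -- not-in-Y facts
  have hv1Y : v1 ∉ Y := fun h => h.2.1 rfl
  have hv2Y : v2 ∉ Y := fun h => h.2.2.1 rfl
  have hp1Y : p1.1 ∉ Y := fun h => h.2.2.2.1 rfl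
  have hp2Y : p2.1 ∉ Y := fun h => h.2.2.2.2.1 rfl
  have hp3Y : p3.1 ∉ Y := fun h => h.2.2.2.2.2 rfl
  -- assemble the minor
  let fL : Fin 3 → Set α := fun i => if i.val = 0 then {v1} else if i.val = 1 then {v2} else Y
  let fR : Fin 3 → Set α := fun i => if i.val = 0 then {p1.1} else if i.val = 1 then {p2.1} else {p3.1}
  refine ⟨Sum.elim fL fR, ?_, ?_, ?_, ?_⟩
  · rintro (i | i) <;> fin_cases i <;>
      simp only [Sum.elim_inl, Sum.elim_inr, fL, fR] <;> norm_num
    exact ⟨t0, ht0Y⟩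
  · rintro (i | i) <;> fin_cases i <;>
      simp only [Sum.elim_inl, Sum.elim_inr, fL, fR] <;> norm_num <;>
      first
        | exact induce_singleton_connected G _
        | exact hYconn
  · rintro (i | i) (j | j) hne <;> fin_cases i <;> fin_cases j <;>
      simp only [Sum.elim_inl, Sum.elim_inr, fL, fR] <;> norm_num <;>
      first
        | exact absurd rfl hne
        | assumption
        | exact hab
        | exact hab.symm
        | exact (hcb p1 hp1l).1.symm
        | exact (hcb p1 hp1l).2.symm
        | exact (hcb p2 hp2l).1.symm
        | exact (hcb p2 hp2l).2.symm
        | exact (hcb p3 hp3l).1.symm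
        | exact (hcb p3 hp3l).2.symm
        | exact (hcb p1 hp1l).1
        | exact (hcb p1 hp1l).2
        | exact (hcb p2 hp2l).1
        | exact (hcb p2 hp2l).2
        | exact (hcb p3 hp3l).1
        | exact (hcb p3 hp3l).2
        | exact hne12
        | exact hne12.symm
        | exact hne13
        | exact hne13.symm
        | exact hne23
        | exact hne23.symm
  · rintro (i | i) (j | j) hadj
    · simp at hadj
    · fin_cases i <;> fin_cases j <;>
        simp only [Sum.elim_inl, Sum.elim_inr, fL, fR] <;> norm_num <;>
        first
          | exact hA11 | exact hA21 | exact hA31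
          | exact hA12 | exact hA22 | exact hA32
          | exact ⟨z1, hz1Y, hz1⟩ | exact ⟨z2, hz2Y, hz2⟩ | exact ⟨z3, hz3Y, hz3⟩
    · fin_cases i <;> fin_cases j <;>
        simp only [Sum.elim_inl, Sum.elim_inr, fL, fR] <;> norm_num <;>
        first
          | exact hA11.symm | exact hA21.symm | exact hA31.symm
          | exact hA12.symm | exact hA22.symm | exact hA32.symm
          | exact ⟨z1, hz1Y, hz1.symm⟩ | exact ⟨z2, hz2Y, hz2.symm⟩
          | exact ⟨z3, hz3Y, hz3.symm⟩
    · simp at hadj
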